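/- Every bounded infinite countable abelian group is not cohopfian, i.e., it is isomorphic to some proper subgroup of itself. -/

import Mathlib

open DirectSum Function

namespace NotCohopfAux

/-- Cast between `ZMod` types with equal modulus. -/
def zmodCongr {a b : ℕ} (h : a = b) : ZMod a ≃+ ZMod b := by subst h; exact AddEquiv.refl _

section Merge

variable {ι κ : Type*} [DecidableEq ι] [DecidableEq κ]
variable (F : ι ⊕ κ → Type*) [∀ s, AddCommMonoid (F s)]

private def mergeTo : (⨁ i, F (Sum.inl i)) × (⨁ j, F (Sum.inr j)) →+ ⨁ s, F s :=
  (toAddMonoid fun i => of F (Sum.inl i)).coprod (toAddMonoid fun j => of F (Sum.inr j))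

private def mergeFrom : (⨁ s, F s) →+ (⨁ i, F (Sum.inl i)) × (⨁ j, F (Sum.inr j)) :=
  toAddMonoid fun s => match s with
    | Sum.inl i => (AddMonoidHom.inl _ _).comp (of (fun i => F (Sum.inl i)) i)
    | Sum.inr j => (AddMonoidHom.inr _ _).comp (of (fun j => F (Sum.inr j)) j)

private lemma mergeFrom_comp_inl :
    (mergeFrom F).comp (toAddMonoid fun i => of F (Sum.inl i)) =
      AddMonoidHom.inl (⨁ i, F (Sum.inl i)) (⨁ j, F (Sum.inr j)) := by
  apply addHom_ext
  intro i y
  simp [mergeFrom, toAddMonoid_of]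

private lemma mergeFrom_comp_inr :
    (mergeFrom F).comp (toAddMonoid fun j => of F (Sum.inr j)) =
      AddMonoidHom.inr (⨁ i, F (Sum.inl i)) (⨁ j, F (Sum.inr j)) := by
  apply addHom_ext
  intro j y
  simp [mergeFrom, toAddMonoid_of]

/-- A direct sum over `ι ⊕ κ` splits as a product. -/
def mergeEquiv : ((⨁ i, F (Sum.inl i)) × (⨁ j, F (Sum.inr j))) ≃+ ⨁ s, F s where
  toFun := mergeTo F
  invFun := mergeFrom F
  left_inv := by
    rintro ⟨x, y⟩
    have h1 := DFunLike.congr_fun (mergeFrom_comp_inl F) x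
    have h2 := DFunLike.congr_fun (mergeFrom_comp_inr F) y
    simp only [AddMonoidHom.comp_apply] at h1 h2
    show mergeFrom F (mergeTo F (x, y)) = (x, y)
    have : mergeTo F (x, y) = (toAddMonoid fun i => of F (Sum.inl i)) x
        + (toAddMonoid fun j => of F (Sum.inr j)) y := rfl
    rw [this, map_add, h1, h2]
    simp
  right_inv := by
    intro z
    have : (mergeTo F).comp (mergeFrom F) = AddMonoidHom.id _ := by
      apply addHom_ext
      rintro (i | j) y <;>
        simp [mergeFrom, mergeTo, toAddMonoid_of]
    exact DFunLike.congr_fun this z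
  map_add' := (mergeTo F).map_add

end Merge

section Reindex

variable {ι : Type*} [DecidableEq ι] (T : Set ι) [DecidablePred (· ∈ T)]
variable (F : ι → Type*) [∀ i, AddCommMonoid (F i)]

private def splitTo : (⨁ t : T, F ↑t) × (⨁ t : ↥Tᶜ, F ↑t) →+ ⨁ i, F i :=
  (toAddMonoid fun t : T => of F ↑t).coprod (toAddMonoid fun t : ↥Tᶜ => of F ↑t)

private def splitFrom : (⨁ i, F i) →+ (⨁ t : T, F ↑t) × (⨁ t : ↥Tᶜ, F ↑t) :=
  toAddMonoid fun i =>
    if h : i ∈ T then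
      (AddMonoidHom.inl _ _).comp (of (fun t : T => F ↑t) ⟨i, h⟩)
    else
      (AddMonoidHom.inr _ _).comp (of (fun t : ↥Tᶜ => F ↑t) ⟨i, h⟩)

private lemma splitFrom_comp_inl :
    (splitFrom T F).comp (toAddMonoid fun t : T => of F ↑t) = AddMonoidHom.inl _ _ := by
  apply addHom_ext
  rintro ⟨i, hi⟩ y
  simp [splitFrom, toAddMonoid_of, dif_pos hi]

private lemma splitFrom_comp_inr :
    (splitFrom T F).comp (toAddMonoid fun t : ↥Tᶜ => of F ↑t) = AddMonoidHom.inr _ _ := by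
  apply addHom_ext
  rintro ⟨i, hi⟩ y
  simp [splitFrom, toAddMonoid_of, dif_neg hi]

/-- A direct sum splits along a subset of the index type. -/
def splitEquiv : ((⨁ t : T, F ↑t) × (⨁ t : ↥Tᶜ, F ↑t)) ≃+ ⨁ i, F i where
  toFun := splitTo T F
  invFun := splitFrom T F
  left_inv := by
    rintro ⟨x, y⟩
    have h1 := DFunLike.congr_fun (splitFrom_comp_inl T F) x
    have h2 := DFunLike.congr_fun (splitFrom_comp_inr T F) y
    simp only [AddMonoidHom.comp_apply] at h1 h2
    show splitFrom T F (splitTo T F (x, y)) = (x, y)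
    have : splitTo T F (x, y) = (toAddMonoid fun t : T => of F ↑t) x
        + (toAddMonoid fun t : ↥Tᶜ => of F ↑t) y := rfl
    rw [this, map_add, h1, h2]
    simp
  right_inv := by
    intro z
    have : (splitTo T F).comp (splitFrom T F) = AddMonoidHom.id _ := by
      apply addHom_ext
      intro i y
      by_cases h : i ∈ T <;>
        simp [splitFrom, splitTo, toAddMonoid_of, h]
    exact DFunLike.congr_fun this z
  map_add' := (splitTo T F).map_add

end Reindex

section ReindexConst

variable {α β M : Type*} [DecidableEq α] [DecidableEq β] [AddCommMonoid M]

/-- Reindexing a direct sum of a constant family along an equivalence. -/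
def reindexConst (e : α ≃ β) : (⨁ _ : α, M) ≃+ ⨁ _ : β, M where
  toFun := toAddMonoid fun a => of (fun _ : β => M) (e a)
  invFun := toAddMonoid fun b => of (fun _ : α => M) (e.symm b)
  left_inv := by
    intro z
    have : (toAddMonoid fun b => of (fun _ : α => M) (e.symm b)).comp
        (toAddMonoid fun a => of (fun _ : β => M) (e a)) = AddMonoidHom.id _ := by
      apply addHom_ext
      intro a y
      simp [toAddMonoid_of]
    exact DFunLike.congr_fun this z
  right_inv := by
    intro z
    have : (toAddMonoid fun a => of (fun _ : β => M) (e a)).comp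
        (toAddMonoid fun b => of (fun _ : α => M) (e.symm b)) = AddMonoidHom.id _ := by
      apply addHom_ext
      intro b y
      simp [toAddMonoid_of]
    exact DFunLike.congr_fun this z
  map_add' := map_add _

end ReindexConst

lemma sum_of_apply_mem {ι : Type*} [DecidableEq ι] {β : ι → Type*} [∀ i, AddCommMonoid (β i)]
    (s : Finset ι) (f : ∀ i, β i) {j : ι} (hj : j ∈ s) :
    (∑ i ∈ s, DirectSum.of β i (f i)) j = f j := by
  classical
  rw [DFinsupp.finset_sum_apply]
  rw [Finset.sum_eq_single_of_mem j hj]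
  · exact of_eq_same j (f j)
  · intro b _ hb
    exact of_eq_of_ne _ _ _ hb.symm

lemma zmod_valCast {n : ℕ} (hn : n ≠ 0) (x : ZMod n) : ((x.val : ℕ) : ZMod n) = x := by
  haveI : NeZero n := ⟨hn⟩
  exact ZMod.natCast_rightInverse x

end NotCohopfAux

namespace NotCohopfAux

open DirectSum Function

universe v

/-- In a vector space over `ZMod p`, any subgroup admits a complementary subgroup which is
a direct sum of copies of `ZMod p`. -/
lemma socle_split (p : ℕ) [Fact p.Prime] (V : Type v) [AddCommGroup V] [Module (ZMod p) V]
    (S : AddSubgroup V) :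
    ∃ (W : AddSubgroup V) (B : Type v) (_ : ↥W ≃+ ⨁ _ : B, ZMod p),
      (∀ v : V, ∃ s ∈ S, ∃ w ∈ W, s + w = v) ∧
      (∀ v : V, v ∈ S → v ∈ W → v = 0) := by
  classical
  obtain ⟨W', hUW⟩ := (AddSubgroup.toZModSubmodule p S).exists_isCompl
  refine ⟨W'.toAddSubgroup, Module.Basis.ofVectorSpaceIndex (ZMod p) ↥W',
    (Module.Basis.ofVectorSpace (ZMod p) ↥W').repr.toAddEquiv.trans
      (finsuppLEquivDirectSum (ZMod p) (ZMod p) _).toAddEquiv, ?_, ?_⟩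
  · intro w
    have hmem : w ∈ (AddSubgroup.toZModSubmodule p S) ⊔ W' := by
      rw [hUW.sup_eq_top]; trivial
    obtain ⟨s, hs, w', hw', h⟩ := Submodule.mem_sup.mp hmem
    exact ⟨s, hs, w', hw', h⟩
  · intro v hvS hvW
    have hmem : v ∈ (AddSubgroup.toZModSubmodule p S) ⊓ W' := ⟨hvS, hvW⟩
    rw [disjoint_iff.mp hUW.disjoint] at hmem
    exact hmem

end NotCohopfAux

namespace NotCohopfAux

open DirectSum Function

section Shift

/-- The shift endomorphism on `⨁ _ : ℕ, M`. -/
private def natShift (M : Type*) [AddCommMonoid M] : (⨁ _ : ℕ, M) →+ ⨁ _ : ℕ, M :=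
  toAddMonoid fun m => of (fun _ : ℕ => M) (m + 1)

private lemma natShift_injective (M : Type*) [AddCommMonoid M] : Injective (natShift M) := by
  have h : (toAddMonoid fun m => of (fun _ : ℕ => M) (m - 1)).comp (natShift M)
      = AddMonoidHom.id _ := by
    apply addHom_ext
    intro m y
    simp [natShift, toAddMonoid_of]
  intro a b hab
  have := DFunLike.congr_fun h a
  have h2 := DFunLike.congr_fun h b
  simp only [AddMonoidHom.comp_apply, AddMonoidHom.id_apply] at this h2
  rw [← this, ← h2, hab]

private lemma natShift_apply_zero (M : Type*) [AddCommMonoid M] (x : ⨁ _ : ℕ, M) :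
    natShift M x 0 = 0 := by
  classical
  induction x using DirectSum.induction_on with
  | zero => simp
  | of m y =>
    rw [natShift, toAddMonoid_of]
    exact of_eq_of_ne _ _ _ (Nat.succ_ne_zero m).symm
  | add x y hx hy =>
    rw [map_add, DFinsupp.add_apply, hx, hy, add_zero]

/-- Key abstract lemma: a direct sum of nontrivial cyclic groups of bounded order over an
infinite countable index type admits an injective non-surjective endomorphism. -/
lemma exists_endo_of_directSum {ι : Type*} [Countable ι] [Infinite ι] (q : ι → ℕ) (N : ℕ)
    (hq2 : ∀ i, 2 ≤ q i) (hqN : ∀ i, q i ≤ N) :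
    ∃ f : (⨁ i, ZMod (q i)) →+ (⨁ i, ZMod (q i)),
      Injective f ∧ ¬Surjective f := by
  classical
  -- pigeonhole: find an infinite fiber of q
  set qF : ι → Fin (N + 1) := fun i => ⟨q i, Nat.lt_succ_of_le (hqN i)⟩ with hqF
  obtain ⟨v, hv⟩ := Finite.exists_infinite_fiber qF
  set T : Set ι := qF ⁻¹' {v} with hT
  haveI : Infinite ↥T := hv
  have hconst : ∀ t : ↥T, q ↑t = (v : ℕ) := by
    rintro ⟨t, ht⟩
    have : qF t = v := ht
    simpa [hqF] using congrArg Fin.val this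
  obtain ⟨eT⟩ : Nonempty (↥T ≃ ℕ) := nonempty_equiv_of_countable
  have hv2 : 2 ≤ (v : ℕ) := by
    obtain ⟨t⟩ := (inferInstance : Nonempty ↥T)
    rw [← hconst t]; exact hq2 _
  haveI : Fact (1 < (v : ℕ)) := ⟨hv2⟩
  -- assemble the equivalence D ≃+ (⨁ _ : ℕ, ZMod v) × C
  set C := ⨁ t : ↥Tᶜ, ZMod (q ↑t) with hC
  set Φ : (⨁ i, ZMod (q i)) ≃+ (⨁ _ : ℕ, ZMod (v : ℕ)) × C :=
    (splitEquiv T fun i => ZMod (q i)).symm.trans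
      (AddEquiv.prodCongr
        ((DFinsupp.mapRange.addEquiv fun t : ↥T => zmodCongr (hconst t)).trans
          (reindexConst eT))
        (AddEquiv.refl C)) with hΦ
  set F := natShift (ZMod (v : ℕ)) with hF
  refine ⟨Φ.symm.toAddMonoidHom.comp ((F.prodMap (AddMonoidHom.id C)).comp Φ.toAddMonoidHom),
    ?_, ?_⟩
  · -- injective
    intro a b hab
    simp only [AddMonoidHom.comp_apply, AddEquiv.coe_toAddMonoidHom] at hab
    have h2 := Φ.symm.injective hab
    have h3 : Prod.map F (AddMonoidHom.id C) (Φ a) = Prod.map F (AddMonoidHom.id C) (Φ b) := h2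
    have h4 : F (Φ a).1 = F (Φ b).1 ∧ (Φ a).2 = (Φ b).2 := by
      constructor
      · exact congrArg Prod.fst h3
      · simpa using congrArg Prod.snd h3
    have : (Φ a).1 = (Φ b).1 := natShift_injective _ h4.1
    exact Φ.injective (Prod.ext this h4.2)
  · -- not surjective
    intro hsurj
    obtain ⟨a, ha⟩ := hsurj (Φ.symm (of (fun _ : ℕ => ZMod (v : ℕ)) 0 1, 0))
    simp only [AddMonoidHom.comp_apply, AddEquiv.coe_toAddMonoidHom] at ha
    have := Φ.symm.injective.eq_iff.mp ha
    have h1 : F (Φ a).1 = of (fun _ : ℕ => ZMod (v : ℕ)) 0 1 := congrArg Prod.fst this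
    have h2 := natShift_apply_zero (ZMod (v : ℕ)) (Φ a).1
    rw [h1] at h2
    rw [of_eq_same] at h2
    exact one_ne_zero h2

end Shift

end NotCohopfAux

namespace NotCohopfAux

open DirectSum Function

universe u

theorem prufer (p : ℕ) (hp : p.Prime) :
    ∀ (k : ℕ) (G : Type u) [AddCommGroup G], (∀ g : G, p ^ k • g = 0) →
      ∃ (ι : Type u) (e : ι → ℕ), (∀ i, 1 ≤ e i ∧ e i ≤ k) ∧
        Nonempty (G ≃+ ⨁ i, ZMod (p ^ e i)) := by
  intro k
  induction k with
  | zero =>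
    intro G _ h
    refine ⟨PEmpty, fun i => i.elim, fun i => i.elim, ⟨?_⟩⟩
    have hG : ∀ g : G, g = 0 := fun g => by simpa using h g
    exact { toFun := fun _ => 0, invFun := fun _ => 0,
            left_inv := fun g => (hG g).symm,
            right_inv := fun x => DFinsupp.ext fun i => i.elim,
            map_add' := fun _ _ => (add_zero (0 : ⨁ i : PEmpty, ZMod (p ^ PEmpty.elim i))).symm }
  | succ k IH =>
    intro G _ hbound
    classical
    haveI : Fact p.Prime := ⟨hp⟩
    have hpne : p ≠ 0 := hp.pos.ne'
    -- multiplication by p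
    set μ : G →+ G := AddMonoidHom.mk' (fun g => p • g) (fun a b => smul_add p a b) with hμ
    have hμapp : ∀ g : G, μ g = p • g := fun g => rfl
    set P : AddSubgroup G := μ.range with hP
    set Ω : AddSubgroup G := μ.ker with hΩdef
    have hPb : ∀ z : ↥P, p ^ k • z = 0 := by
      rintro ⟨-, g, rfl⟩
      apply Subtype.ext
      show p ^ k • (μ g) = 0
      rw [hμapp, smul_smul, ← pow_succ]
      exact hbound g
    obtain ⟨ι, e, he, ⟨φ⟩⟩ := IH ↥P hPb
    have hene : ∀ i, (p : ℕ) ^ e i ≠ 0 := fun i => pow_ne_zero _ hpne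
    have hene' : ∀ i, (p : ℕ) ^ (e i + 1) ≠ 0 := fun i => pow_ne_zero _ hpne
    -- generators of pG and their lifts
    set y : ι → ↥P := fun i => φ.symm (DirectSum.of (fun i => ZMod (p ^ e i)) i 1) with hy
    have hyord : ∀ i, p ^ e i • y i = 0 := by
      intro i
      rw [hy, ← map_nsmul, ← map_nsmul]
      have h1 : p ^ e i • (1 : ZMod (p ^ e i)) = 0 := by
        rw [nsmul_eq_mul, mul_one, ZMod.natCast_self]
      rw [h1, map_zero, map_zero]
    have hx' : ∀ i, ∃ g : G, μ g = ↑(y i) := fun i => (y i).2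
    choose x hx using hx'
    have hxord : ∀ i, (zmultiplesHom G (x i)) ((p ^ (e i + 1) : ℕ) : ℤ) = 0 := by
      intro i
      show ((p ^ (e i + 1) : ℕ) : ℤ) • x i = 0
      rw [natCast_zsmul, pow_succ, mul_smul]
      have : p ^ e i • (p • x i) = p ^ e i • (↑(y i) : G) := by
        rw [← hμapp, hx i]
      rw [this, ← AddSubgroup.coe_nsmul, hyord, AddSubgroup.coe_zero]
    -- the map from the candidate direct sum
    set χ : ∀ i, ZMod (p ^ (e i + 1)) →+ G := fun i =>
      ZMod.lift _ ⟨zmultiplesHom G (x i), hxord i⟩ with hχ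
    set σ : (⨁ i, ZMod (p ^ (e i + 1))) →+ G := toAddMonoid χ with hσ
    have hσ_int : ∀ (i) (t : ℤ),
        σ (DirectSum.of (fun i => ZMod (p ^ (e i + 1))) i ((t : ZMod (p ^ (e i + 1))))) =
          t • x i := by
      intro i t
      rw [hσ, toAddMonoid_of, hχ]
      exact ZMod.lift_coe _ _ t
    have hσ_nat : ∀ (i) (m : ℕ),
        σ (DirectSum.of (fun i => ZMod (p ^ (e i + 1))) i ((m : ZMod (p ^ (e i + 1))))) =
          m • x i := by
      intro i m
      have h1 := hσ_int i (m : ℤ)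
      rw [Int.cast_natCast, natCast_zsmul] at h1
      exact h1
    -- the projection maps
    have hdvd : ∀ i, (p : ℕ) ^ e i ∣ p ^ (e i + 1) := fun i => pow_dvd_pow p (Nat.le_succ _)
    set π : ∀ i, ZMod (p ^ (e i + 1)) →+ ZMod (p ^ e i) := fun i =>
      (ZMod.castHom (hdvd i) (ZMod (p ^ e i))).toAddMonoidHom with hπ
    set Prj : (⨁ i, ZMod (p ^ (e i + 1))) →+ ⨁ i, ZMod (p ^ e i) :=
      toAddMonoid (fun i => (DirectSum.of (fun i => ZMod (p ^ e i)) i).comp (π i)) with hPrj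
    have hπnat : ∀ (i) (m : ℕ),
        π i ((m : ZMod (p ^ (e i + 1)))) = (m : ZMod (p ^ e i)) := by
      intro i m
      rw [hπ]
      exact map_natCast (ZMod.castHom (hdvd i) (ZMod (p ^ e i))) m
    have hofnat : ∀ (i) (m : ℕ),
        DirectSum.of (fun i => ZMod (p ^ e i)) i ((m : ZMod (p ^ e i)))
          = m • DirectSum.of (fun i => ZMod (p ^ e i)) i 1 := by
      intro i m
      rw [← map_nsmul]
      congr 1
      rw [nsmul_eq_mul, mul_one]
    -- the key commuting square: μ ∘ σ = subtype ∘ φ.symm ∘ Π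
    have hS2 : μ.comp σ = P.subtype.comp (φ.symm.toAddMonoidHom.comp Prj) := by
      apply addHom_ext
      intro i yv
      obtain ⟨m, rfl⟩ : ∃ m : ℕ, ((m : ZMod (p ^ (e i + 1)))) = yv :=
        ⟨yv.val, zmod_valCast (hene' i) yv⟩
      simp only [AddMonoidHom.comp_apply]
      rw [hσ_nat, map_nsmul, hx i, hPrj, toAddMonoid_of]
      simp only [AddMonoidHom.comp_apply]
      rw [hπnat, hofnat, map_nsmul, map_nsmul]
      rw [hy]
      simp
    -- the socle and its module structure
    have hΩb : ∀ w : ↥Ω, p • w = 0 := by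
      rintro ⟨w, hw⟩
      apply Subtype.ext
      show p • w = 0
      rw [← hμapp]
      exact hw
    letI : Module (ZMod p) ↥Ω := AddCommGroup.zmodModule hΩb
    obtain ⟨W, B, ψ₀, hWsup, hWdis⟩ := socle_split p ↥Ω (σ.range.comap Ω.subtype)
    set Ψ : (⨁ i, ZMod (p ^ (e i + 1))) × ↥W →+ G :=
      σ.coprod (Ω.subtype.comp W.subtype) with hΨ
    have hΨapp : ∀ (c : ⨁ i, ZMod (p ^ (e i + 1))) (w : ↥W),
        Ψ (c, w) = σ c + ((↑(↑w : ↥Ω) : G)) := by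
      intro c w
      rfl
    -- surjectivity
    have hΨsurj : Surjective Ψ := by
      intro g
      have hpg : μ g ∈ P := ⟨g, rfl⟩
      set d := φ (⟨μ g, hpg⟩ : ↥P) with hd
      set c₁ : ⨁ i, ZMod (p ^ (e i + 1)) :=
        ∑ i ∈ d.support, DirectSum.of _ i (((d i).val : ZMod (p ^ (e i + 1)))) with hc₁
      have hPrjc₁ : Prj c₁ = d := by
        rw [hc₁, map_sum]
        have hterm : ∀ i ∈ d.support,
            Prj (DirectSum.of (fun i => ZMod (p ^ (e i + 1))) i (((d i).val : ZMod (p ^ (e i + 1)))))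
              = DirectSum.of (fun i => ZMod (p ^ e i)) i (d i) := by
          intro i _
          rw [hPrj, toAddMonoid_of]
          simp only [AddMonoidHom.comp_apply]
          rw [hπnat, zmod_valCast (hene i)]
        rw [Finset.sum_congr rfl hterm]
        exact DirectSum.sum_support_of d
      have hμσc₁ : μ (σ c₁) = μ g := by
        have h1 := DFunLike.congr_fun hS2 c₁
        simp only [AddMonoidHom.comp_apply] at h1
        rw [h1, hPrjc₁]
        show ↑(φ.symm (φ ⟨μ g, hpg⟩)) = μ g
        rw [AddEquiv.symm_apply_apply]
      have hω : g - σ c₁ ∈ Ω := by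
        show μ (g - σ c₁) = 0
        rw [map_sub, hμσc₁, sub_self]
      obtain ⟨u, hu, w, hw, huw⟩ := hWsup (⟨g - σ c₁, hω⟩ : ↥Ω)
      obtain ⟨c₂, hc₂⟩ : ∃ c₂, σ c₂ = (↑u : G) := hu
      refine ⟨(c₁ + c₂, ⟨w, hw⟩), ?_⟩
      rw [hΨapp, map_add, hc₂]
      have hcoe : (↑u : G) + (↑w : G) = g - σ c₁ := by
        have h12 := congrArg (fun z : ↥Ω => (↑z : G)) huw
        simpa using h12
      have hww : ((↑(⟨w, hw⟩ : ↥W) : ↥Ω) : G) = (↑w : G) := rfl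
      rw [hww, add_assoc, hcoe]
      abel
    -- injectivity
    have hΨinj : Injective Ψ := by
      rw [injective_iff_map_eq_zero]
      rintro ⟨c, w⟩ hcw
      rw [hΨapp] at hcw
      have hwΩ : μ ((↑(↑w : ↥Ω) : G)) = 0 := (↑w : ↥Ω).2
      have hμσ : μ (σ c) = 0 := by
        have h1 := congrArg μ hcw
        rw [map_add, hwΩ, add_zero, map_zero] at h1
        exact h1
      have hPrjc : Prj c = 0 := by
        have h1 := DFunLike.congr_fun hS2 c
        simp only [AddMonoidHom.comp_apply] at h1
        rw [hμσ] at h1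
        have h2 : φ.symm (Prj c) = 0 := by
          apply Subtype.ext
          exact h1.symm
        have h3 := congrArg φ h2
        rw [AddEquiv.apply_symm_apply, map_zero] at h3
        exact h3
      have hcomp : ∀ j, (((c j).val : ℕ) : ZMod (p ^ e j)) = 0 := by
        intro j
        by_cases hj : j ∈ c.support
        · have hcsum : Prj c = ∑ i ∈ c.support,
              DirectSum.of (fun i => ZMod (p ^ e i)) i (π i (c i)) := by
            conv_lhs => rw [← DirectSum.sum_support_of c]
            rw [map_sum]
            refine Finset.sum_congr rfl fun i _ => ?_
            rw [hPrj, toAddMonoid_of]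
            rfl
          have h5 : (Prj c) j = π j (c j) := by
            rw [hcsum]
            exact sum_of_apply_mem _ _ hj
          rw [hPrjc] at h5
          have hval : π j (c j) = (((c j).val : ℕ) : ZMod (p ^ e j)) := by
            conv_lhs => rw [← zmod_valCast (hene' j) (c j)]
            exact hπnat j _
          rw [hval] at h5
          exact h5.symm
        · have hc0 : c j = 0 := DFinsupp.notMem_support_iff.mp hj
          rw [hc0]
          simp
      have hdvdval : ∀ j, p ^ e j ∣ (c j).val := by
        intro j
        haveI : NeZero (p ^ e j) := ⟨hene j⟩
        exact (ZMod.natCast_eq_zero_iff _ _).mp (hcomp j)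
      set t : ι → ℕ := fun j => (c j).val / p ^ e j with ht
      have hcj : ∀ j, (c j).val = p ^ e j * t j := fun j =>
        (Nat.mul_div_cancel' (hdvdval j)).symm
      -- σ c lies in both U-side and W
      have hσcS : σ c ∈ σ.range := ⟨c, rfl⟩
      set u' : ↥Ω := ⟨σ c, hμσ⟩ with hu'
      have hu'U : u' ∈ σ.range.comap Ω.subtype := hσcS
      have hu'W : u' ∈ W := by
        have h6 : u' = -(↑w : ↥Ω) := by
          apply Subtype.ext
          show σ c = -(↑(↑w : ↥Ω) : G)
          exact eq_neg_of_add_eq_zero_left hcw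
        rw [h6]
        exact neg_mem w.2
      have hu'0 : u' = 0 := hWdis u' hu'U hu'W
      have hσc0 : σ c = 0 := by
        have := congrArg (fun z : ↥Ω => (↑z : G)) hu'0
        exact this
      have hw0 : w = 0 := by
        have h7 : (↑(↑w : ↥Ω) : G) = 0 := by
          rw [hσc0, zero_add] at hcw
          exact hcw
        apply Subtype.ext
        apply Subtype.ext
        exact h7
      -- now show c = 0
      have hσsum : σ c = ↑(∑ j ∈ c.support, ((t j * p ^ (e j - 1)) • y j)) := by
        conv_lhs => rw [← DirectSum.sum_support_of c]
        rw [map_sum, AddSubmonoidClass.coe_finset_sum]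
        refine Finset.sum_congr rfl fun j hj => ?_
        conv_lhs => rw [← zmod_valCast (hene' j) (c j)]
        rw [hcj j, hσ_nat]
        have he1 : 1 ≤ e j := (he j).1
        have hsplit : p ^ e j * t j = (t j * p ^ (e j - 1)) * p := by
          conv_lhs => rw [show e j = (e j - 1) + 1 from (Nat.succ_pred_eq_of_pos he1).symm]
          rw [pow_succ]
          ring
        rw [hsplit, mul_smul, ← hμapp, hx j, ← AddSubgroup.coe_nsmul]
      rw [hσc0] at hσsum
      have hz0 : (∑ j ∈ c.support, ((t j * p ^ (e j - 1)) • y j)) = 0 := by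
        have := hσsum.symm
        exact_mod_cast (ZeroMemClass.coe_eq_zero).mp this
      have hZ : (∑ j ∈ c.support, DirectSum.of (fun i => ZMod (p ^ e i)) j
          (((t j * p ^ (e j - 1) : ℕ)) : ZMod (p ^ e j))) = 0 := by
        have h8 := congrArg φ hz0
        rw [map_sum, map_zero] at h8
        rw [← h8]
        refine Finset.sum_congr rfl fun j _ => ?_
        rw [map_nsmul, hy, AddEquiv.apply_symm_apply, hofnat]
      have hc0 : c = 0 := by
        refine DFinsupp.ext fun j => ?_
        show c j = 0
        by_cases hj : j ∈ c.support
        · have h9 := congrArg (fun z : ⨁ i, ZMod (p ^ e i) => z j) hZ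
          simp only at h9
          rw [sum_of_apply_mem _ _ hj] at h9
          haveI : NeZero (p ^ e j) := ⟨hene j⟩
          have hdvd2 : p ^ e j ∣ t j * p ^ (e j - 1) :=
            (ZMod.natCast_eq_zero_iff _ _).mp (by simpa using h9)
          have he1 : 1 ≤ e j := (he j).1
          have hpt : p ∣ t j := by
            have h10 : p ^ (e j - 1) * p ∣ p ^ (e j - 1) * t j := by
              have hrw : p ^ (e j - 1) * p = p ^ e j := by
                conv_rhs => rw [show e j = (e j - 1) + 1 from (Nat.succ_pred_eq_of_pos he1).symm]
                rw [pow_succ]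
              rw [hrw, mul_comm (p ^ (e j - 1)) (t j)]
              exact hdvd2
            exact (Nat.mul_dvd_mul_iff_left (pow_pos hp.pos _)).mp h10
          obtain ⟨t', ht'⟩ := hpt
          have h11 : c j = (((p ^ (e j + 1)) * t' : ℕ) : ZMod (p ^ (e j + 1))) := by
            conv_lhs => rw [← zmod_valCast (hene' j) (c j)]
            rw [hcj j, ht']
            congr 1
            rw [pow_succ]
            ring
          rw [h11]
          haveI : NeZero (p ^ (e j + 1)) := ⟨hene' j⟩
          exact (ZMod.natCast_eq_zero_iff _ _).mpr ⟨t', rfl⟩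
        · exact DFinsupp.notMem_support_iff.mp hj
      rw [Prod.ext_iff]
      exact ⟨hc0, hw0⟩
    -- assemble the final equivalence
    set ψW : ↥W ≃+ ⨁ _ : B, ZMod (p ^ 1) :=
      ψ₀.trans (DFinsupp.mapRange.addEquiv fun _ : B => zmodCongr (pow_one p).symm) with hψW
    set e' : ι ⊕ B → ℕ := Sum.elim (fun i => e i + 1) (fun _ => 1) with he'
    refine ⟨ι ⊕ B, e', ?_, ?_⟩
    · rintro (i | b)
      · exact ⟨Nat.le_add_left _ _, Nat.succ_le_succ (he i).2⟩
      · exact ⟨le_refl _, Nat.le_add_left _ _⟩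
    · set merge := mergeEquiv (fun s : ι ⊕ B => ZMod (p ^ e' s)) with hmerge
      exact ⟨((AddEquiv.ofBijective Ψ ⟨hΨinj, hΨsurj⟩).symm.trans
        (AddEquiv.prodCongr (AddEquiv.refl _) ψW)).trans merge⟩

end NotCohopfAux

namespace NotCohopfAux

open DirectSum Function

universe u

lemma exists_endo_primePow (p k : ℕ) (hp : p.Prime) (G : Type u) [AddCommGroup G]
    [Countable G] [Infinite G] (h : ∀ g : G, p ^ k • g = 0) :
    ∃ f : G →+ G, Injective f ∧ ¬Surjective f := by
  classical
  obtain ⟨ι, e, he, ⟨φ⟩⟩ := prufer p hp k G h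
  haveI : Infinite ι := by
    rw [← not_finite_iff_infinite]
    intro hfin
    haveI : ∀ i, Finite (ZMod (p ^ e i)) := fun i => by
      haveI : NeZero (p ^ e i) := ⟨pow_ne_zero _ hp.pos.ne'⟩
      infer_instance
    haveI : Finite (∀ i, ZMod (p ^ e i)) := inferInstance
    haveI : Finite (⨁ i, ZMod (p ^ e i)) :=
      Finite.of_injective (fun (x : ⨁ i, ZMod (p ^ e i)) (i : ι) => x i)
        (DFunLike.coe_injective)
    haveI : Finite G := Finite.of_equiv _ φ.symm.toEquiv
    exact not_finite G
  haveI : Countable ι := by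
    have hinj : Injective (fun i : ι =>
        φ.symm (DirectSum.of (fun i => ZMod (p ^ e i)) i 1)) := by
      intro i j hij
      by_contra hne
      have h1 : DirectSum.of (fun i => ZMod (p ^ e i)) i 1
          = DirectSum.of (fun i => ZMod (p ^ e i)) j 1 := φ.symm.injective hij
      have h2 := congrArg (fun z : ⨁ i, ZMod (p ^ e i) => z i) h1
      simp only at h2
      rw [DirectSum.of_eq_same, DirectSum.of_eq_of_ne _ _ _ hne] at h2
      have h3 : (1 : ZMod (p ^ e i)) ≠ 0 := by
        haveI : Fact (1 < p ^ e i) := ⟨Nat.one_lt_pow (Nat.one_le_iff_ne_zero.mp (he i).1) hp.one_lt⟩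
        exact one_ne_zero
      exact h3 h2
    exact hinj.countable
  obtain ⟨f, hfi, hfs⟩ := exists_endo_of_directSum (fun i => p ^ e i) (p ^ k)
    (fun i => le_trans hp.two_le (Nat.le_self_pow (Nat.one_le_iff_ne_zero.mp (he i).1) p))
    (fun i => Nat.pow_le_pow_right hp.pos (he i).2)
  refine ⟨(φ.symm.toAddMonoidHom.comp f).comp φ.toAddMonoidHom, ?_, ?_⟩
  · intro a b hab
    simp only [AddMonoidHom.comp_apply, AddEquiv.coe_toAddMonoidHom] at hab
    exact φ.injective (hfi (φ.symm.injective hab))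
  · intro hsurj
    apply hfs
    intro z
    obtain ⟨g, hg⟩ := hsurj (φ.symm z)
    simp only [AddMonoidHom.comp_apply, AddEquiv.coe_toAddMonoidHom] at hg
    exact ⟨φ g, φ.symm.injective hg⟩

/-- The subgroup of elements killed by `m`. -/
def torsBy (G : Type u) [AddCommGroup G] (m : ℕ) : AddSubgroup G :=
  (AddMonoidHom.mk' (fun g : G => m • g) (fun a b => smul_add m a b)).ker

lemma mem_torsBy (G : Type u) [AddCommGroup G] (m : ℕ) (g : G) :
    g ∈ torsBy G m ↔ m • g = 0 := Iff.rfl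

lemma isCompl_torsBy (G : Type u) [AddCommGroup G] {m n : ℕ} (hco : Nat.Coprime m n)
    (h : ∀ g : G, (m * n) • g = 0) : IsCompl (torsBy G m) (torsBy G n) := by
  have hb : (1 : ℤ) = m * Nat.gcdA m n + n * Nat.gcdB m n := by
    have hgcd := Nat.gcd_eq_gcd_ab m n
    rw [Nat.Coprime] at hco
    rw [hco] at hgcd
    exact_mod_cast hgcd
  have hsmul : ∀ g : G, ((m * n : ℕ) : ℤ) • g = 0 := by
    intro g
    rw [natCast_zsmul]
    exact h g
  constructor
  · rw [AddSubgroup.disjoint_def]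
    intro x hxm hxn
    have hxm' : (m : ℤ) • x = 0 := by rw [natCast_zsmul]; exact hxm
    have hxn' : (n : ℤ) • x = 0 := by rw [natCast_zsmul]; exact hxn
    calc x = (1 : ℤ) • x := (one_zsmul x).symm
    _ = (↑m * Nat.gcdA m n + ↑n * Nat.gcdB m n) • x := by rw [← hb]
    _ = (↑m * Nat.gcdA m n) • x + (↑n * Nat.gcdB m n) • x := add_zsmul _ _ _
    _ = (Nat.gcdA m n) • ((m : ℤ) • x) + (Nat.gcdB m n) • ((n : ℤ) • x) := by
          rw [mul_comm (m : ℤ), mul_comm (n : ℤ), mul_zsmul, mul_zsmul]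
    _ = 0 := by rw [hxm', hxn', smul_zero, smul_zero, add_zero]
  · rw [codisjoint_iff, eq_top_iff]
    intro x _
    rw [AddSubgroup.mem_sup]
    refine ⟨(↑n * Nat.gcdB m n) • x, ?_, (↑m * Nat.gcdA m n) • x, ?_, ?_⟩
    · rw [mem_torsBy, ← natCast_zsmul, ← mul_zsmul]
      have : (m : ℤ) * (↑n * Nat.gcdB m n) = Nat.gcdB m n * ((m * n : ℕ) : ℤ) := by
        push_cast; ring
      rw [this, mul_zsmul, hsmul, smul_zero]
    · rw [mem_torsBy, ← natCast_zsmul, ← mul_zsmul]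
      have : (n : ℤ) * (↑m * Nat.gcdA m n) = Nat.gcdA m n * ((m * n : ℕ) : ℤ) := by
        push_cast; ring
      rw [this, mul_zsmul, hsmul, smul_zero]
    · rw [← add_zsmul, add_comm ((n : ℤ) * Nat.gcdB m n), ← hb, one_zsmul]

lemma transfer_endo {G : Type u} [AddCommGroup G] {A B : AddSubgroup G} (hAB : IsCompl A B)
    (f : ↥A →+ ↥A) (hfi : Injective f) (hfs : ¬Surjective f) :
    ∃ F : G →+ G, Injective F ∧ ¬Surjective F := by
  have hAB' : IsCompl (AddSubgroup.toIntSubmodule A) (AddSubgroup.toIntSubmodule B) := by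
    constructor
    · rw [disjoint_iff, eq_bot_iff]
      intro x hx
      have hx1 : x ∈ A := hx.1
      have hx2 : x ∈ B := hx.2
      have := (AddSubgroup.disjoint_def.mp hAB.disjoint) hx1 hx2
      simpa using this
    · rw [codisjoint_iff, eq_top_iff]
      intro x _
      have : x ∈ A ⊔ B := by rw [hAB.sup_eq_top]; trivial
      obtain ⟨a, ha, b, hb, hab⟩ := AddSubgroup.mem_sup.mp this
      rw [Submodule.mem_sup]
      exact ⟨a, ha, b, hb, hab⟩
  set eqv : (↥(AddSubgroup.toIntSubmodule A) × ↥(AddSubgroup.toIntSubmodule B)) ≃+ G :=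
    (Submodule.prodEquivOfIsCompl _ _ hAB').toAddEquiv with heqv
  set pm : (↥A × ↥B) →+ (↥A × ↥B) := f.prodMap (AddMonoidHom.id ↥B) with hpm
  refine ⟨(eqv.toAddMonoidHom.comp pm).comp eqv.symm.toAddMonoidHom, ?_, ?_⟩
  · intro a b hab
    change eqv (pm (eqv.symm a)) = eqv (pm (eqv.symm b)) at hab
    have h1 := eqv.injective hab
    have h2 := congrArg Prod.fst h1
    have h3 := congrArg Prod.snd h1
    have h4 : (eqv.symm.toAddMonoidHom a) = (eqv.symm.toAddMonoidHom b) :=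
      Prod.ext (hfi h2) h3
    exact eqv.symm.injective h4
  · intro hsurj
    apply hfs
    intro a
    obtain ⟨g, hg⟩ := hsurj (eqv (a, 0))
    change eqv (pm (eqv.symm g)) = eqv (a, 0) at hg
    have h1 : pm (eqv.symm g) = (a, 0) := eqv.injective hg
    exact ⟨(eqv.symm g).1, congrArg Prod.fst h1⟩

lemma exists_endo_of_bounded : ∀ (n : ℕ), n ≠ 0 →
    ∀ (G : Type u) [AddCommGroup G] [Countable G] [Infinite G],
      (∀ g : G, n • g = 0) → ∃ f : G →+ G, Injective f ∧ ¬Surjective f := by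
  intro n
  induction n using Nat.strong_induction_on with
  | _ n IH =>
    intro hn G _ _ _ hbound
    rcases eq_or_ne n 1 with h1 | h1
    · exfalso
      have hz : ∀ g : G, g = 0 := fun g => by
        have := hbound g
        rw [h1, one_smul] at this
        exact this
      obtain ⟨a, b, hab⟩ := (inferInstance : Nontrivial G)
      exact hab (by rw [hz a, hz b])
    have hp : n.minFac.Prime := Nat.minFac_prime h1
    have huv : n.minFac ^ n.factorization n.minFac * (n / n.minFac ^ n.factorization n.minFac)
        = n := Nat.ordProj_mul_ordCompl_eq_self n n.minFac
    have hcop : Nat.Coprime (n.minFac ^ n.factorization n.minFac)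
        (n / n.minFac ^ n.factorization n.minFac) :=
      Nat.Coprime.pow_left _ (Nat.coprime_ordCompl hp hn)
    set k := n.factorization n.minFac with hkdef
    set u := n.minFac ^ k with hudef
    set v := n / n.minFac ^ k with hvdef
    rcases eq_or_ne v 1 with hv1 | hv1
    · apply exists_endo_primePow n.minFac k hp G
      intro g
      have hun : u = n := by rw [← huv, hv1, mul_one]
      show u • g = 0
      rw [hun]
      exact hbound g
    · have hkpos : 0 < k := hp.factorization_pos_of_dvd hn n.minFac_dvd
      have hu1 : 1 < u := Nat.one_lt_pow hkpos.ne' hp.one_lt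
      have hvpos : 0 < v := by
        rcases Nat.eq_zero_or_pos v with h0 | h0
        · exfalso; rw [h0, mul_zero] at huv; exact hn huv.symm
        · exact h0
      have hvn : v < n := by
        calc v = 1 * v := (one_mul v).symm
        _ < u * v := by exact Nat.mul_lt_mul_of_lt_of_le hu1 (le_refl v) hvpos
        _ = n := huv
      have hAB := isCompl_torsBy G hcop (fun g => by rw [huv]; exact hbound g)
      by_cases hA : Infinite ↥(torsBy G u)
      · haveI := hA
        obtain ⟨f, hfi, hfs⟩ := exists_endo_primePow n.minFac k hp ↥(torsBy G u)
          (fun z => Subtype.ext (by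
            have := z.2
            rw [mem_torsBy] at this
            show u • (z : G) = 0
            exact this))
        exact transfer_endo hAB f hfi hfs
      · haveI hB : Infinite ↥(torsBy G v) := by
          by_contra hBf
          rw [not_infinite_iff_finite] at hA hBf
          have hsurj : Surjective (fun ab : ↥(torsBy G u) × ↥(torsBy G v) =>
              ((ab.1 : G) + (ab.2 : G))) := by
            intro g
            have hmem : g ∈ torsBy G u ⊔ torsBy G v := by rw [hAB.sup_eq_top]; trivial
            obtain ⟨a, ha, b, hb, hab⟩ := AddSubgroup.mem_sup.mp hmem
            exact ⟨(⟨a, ha⟩, ⟨b, hb⟩), hab⟩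
          haveI : Finite G := Finite.of_surjective _ hsurj
          exact not_finite G
        have hvne : v ≠ 0 := hvpos.ne'
        obtain ⟨f, hfi, hfs⟩ := IH v hvn hvne ↥(torsBy G v)
          (fun z => Subtype.ext (by
            have := z.2
            rw [mem_torsBy] at this
            show v • (z : G) = 0
            exact this))
        exact transfer_endo hAB.symm f hfi hfs

end NotCohopfAux

theorem bounded_infinite_countable_abelian_not_cohopfian
    (G : Type*) [AddCommGroup G] [Countable G] [Infinite G]
    (hbounded : ∃ n : ℕ, 0 < n ∧ ∀ g : G, n • g = 0) :
    ∃ K : AddSubgroup G, K ≠ ⊤ ∧ Nonempty (G ≃+ K) := by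
  obtain ⟨n, hn, hbound⟩ := hbounded
  obtain ⟨f, hfi, hfs⟩ := NotCohopfAux.exists_endo_of_bounded n hn.ne' G hbound
  refine ⟨f.range, ?_, ⟨?_⟩⟩
  · intro htop
    exact hfs (AddMonoidHom.range_eq_top.mp htop)
  · refine AddEquiv.ofBijective f.rangeRestrict ⟨?_, f.rangeRestrict_surjective⟩
    intro a b hab
    exact hfi (Subtype.ext_iff.mp hab)

-- sanity check of axioms
-- #print axioms bounded_infinite_countable_abelian_not_cohopfian
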